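/- Equivalence with the replicated (latent variable) formulation: the infimum over x ∈ ℝ^d of (1/n)‖Ψx − y‖² + 2τ Ω^G_p(x) equals the infimum over v = (v_1,...,v_B) ∈ Π_r ℝ^{G_r} of (1/n)‖Ψ P* v − y‖² + 2τ Σ_r ‖v_r‖_p, where P* v = Σ_r P_r* v_r. Moreover x* is a minimizer of the former iff x* = P* v* for some minimizer v* of the latter. -/

import Mathlib

open scoped Classical ENNReal NNReal

noncomputable def pNormOn (p : ℝ≥0∞) [Fact (1 ≤ p)] {ι : Type*} [Fintype ι] (v : ι → ℝ) : ℝ :=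
  ‖(WithLp.equiv p (ι → ℝ)).symm v‖

lemma pNormOn_nonneg (p : ℝ≥0∞) [Fact (1 ≤ p)] {ι : Type*} [Fintype ι] (v : ι → ℝ) :
    0 ≤ pNormOn p v := norm_nonneg _

lemma pNormOn_continuous (p : ℝ≥0∞) [Fact (1 ≤ p)] {ι : Type*} [Fintype ι] :
    Continuous (pNormOn p (ι := ι)) :=
  continuous_norm.comp (PiLp.continuous_toLp p (fun _ : ι => ℝ))

lemma pNormOn_bound (p : ℝ≥0∞) [Fact (1 ≤ p)] (ι : Type*) [Fintype ι] :
    ∃ C : ℝ, 0 < C ∧ ∀ v : ι → ℝ, ‖v‖ ≤ C * pNormOn p v := by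
  set L := (PiLp.continuousLinearEquiv p ℝ (fun _ : ι => ℝ)).toContinuousLinearMap
  refine ⟨‖L‖ + 1, by positivity, fun v => ?_⟩
  have h1 : L ((WithLp.equiv p (∀ _ : ι, ℝ)).symm v) = v := by
    simp [L, PiLp.coe_continuousLinearEquiv]
  calc ‖v‖ = ‖L ((WithLp.equiv p (∀ _ : ι, ℝ)).symm v)‖ := by rw [h1]
    _ ≤ ‖L‖ * ‖(WithLp.equiv p (∀ _ : ι, ℝ)).symm v‖ := L.le_opNorm _
    _ ≤ (‖L‖ + 1) * pNormOn p v := by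
        have := pNormOn_nonneg p v
        unfold pNormOn
        nlinarith [norm_nonneg L, norm_nonneg ((WithLp.equiv p (∀ _ : ι, ℝ)).symm v)]

def embed {d : ℕ} (G : Finset (Fin d)) (v : {j : Fin d // j ∈ G} → ℝ) : Fin d → ℝ :=
  fun j => if h : j ∈ G then v ⟨j, h⟩ else 0

def embedL {d : ℕ} (G : Finset (Fin d)) : ({j : Fin d // j ∈ G} → ℝ) →ₗ[ℝ] (Fin d → ℝ) where
  toFun := embed G
  map_add' u w := funext fun j => by simp only [embed, Pi.add_apply]; split <;> simp
  map_smul' c u := funext fun j => by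
    simp only [embed, RingHom.id_apply, Pi.smul_apply, smul_eq_mul]
    split <;> simp

noncomputable def Pmap {d B : ℕ} (G : Fin B → Finset (Fin d)) :
    ((r : Fin B) → {j : Fin d // j ∈ G r} → ℝ) →ₗ[ℝ] (Fin d → ℝ) :=
  ∑ r, (embedL (G r)).comp (LinearMap.proj r)

lemma Pmap_apply {d B : ℕ} (G : Fin B → Finset (Fin d))
    (v : (r : Fin B) → {j : Fin d // j ∈ G r} → ℝ) :
    Pmap G v = ∑ r, embed (G r) (v r) := by
  simp only [Pmap, LinearMap.sum_apply, LinearMap.comp_apply, LinearMap.proj_apply]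
  rfl

lemma exists_preimage {d B : ℕ} (G : Fin B → Finset (Fin d))
    (hcover : ∀ j : Fin d, ∃ r, j ∈ G r) (x : Fin d → ℝ) :
    ∃ v : (r : Fin B) → {j : Fin d // j ∈ G r} → ℝ, (∑ r, embed (G r) (v r)) = x := by
  choose rr hrr using hcover
  refine ⟨fun r i => if rr i.1 = r then x i.1 else 0, funext fun j => ?_⟩
  rw [Finset.sum_apply]
  have key : ∀ r : Fin B,
      embed (G r) (fun i : {j : Fin d // j ∈ G r} => if rr i.1 = r then x i.1 else 0) j
      = if rr j = r then x j else 0 := by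
    intro r
    unfold embed
    by_cases hr : rr j = r
    · subst hr
      rw [dif_pos (hrr j)]
    · split <;> simp [hr]
  simp only [key]
  simp

noncomputable def Omega {d B : ℕ} (p : ℝ≥0∞) [Fact (1 ≤ p)] (G : Fin B → Finset (Fin d))
    (x : Fin d → ℝ) : ℝ :=
  sInf { s | ∃ v : (r : Fin B) → {j : Fin d // j ∈ G r} → ℝ,
    (∑ r, embed (G r) (v r)) = x ∧ s = ∑ r, pNormOn p (v r) }

lemma omega_bddBelow {d B : ℕ} (p : ℝ≥0∞) [Fact (1 ≤ p)] (G : Fin B → Finset (Fin d))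
    (x : Fin d → ℝ) :
    BddBelow { s | ∃ v : (r : Fin B) → {j : Fin d // j ∈ G r} → ℝ,
      (∑ r, embed (G r) (v r)) = x ∧ s = ∑ r, pNormOn p (v r) } := by
  refine ⟨0, fun s hs => ?_⟩
  obtain ⟨v, -, rfl⟩ := hs
  exact Finset.sum_nonneg fun r _ => pNormOn_nonneg p _

lemma omega_le {d B : ℕ} (p : ℝ≥0∞) [Fact (1 ≤ p)] (G : Fin B → Finset (Fin d))
    {x : Fin d → ℝ} (v : (r : Fin B) → {j : Fin d // j ∈ G r} → ℝ)
    (h : (∑ r, embed (G r) (v r)) = x) :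
    Omega p G x ≤ ∑ r, pNormOn p (v r) :=
  csInf_le (omega_bddBelow p G x) ⟨v, h, rfl⟩

lemma omega_attained {d B : ℕ} (p : ℝ≥0∞) [Fact (1 ≤ p)] (G : Fin B → Finset (Fin d))
    (hcover : ∀ j : Fin d, ∃ r, j ∈ G r) (x : Fin d → ℝ) :
    ∃ v : (r : Fin B) → {j : Fin d // j ∈ G r} → ℝ,
      (∑ r, embed (G r) (v r)) = x ∧ ∑ r, pNormOn p (v r) = Omega p G x := by
  obtain ⟨v0, hv0⟩ := exists_preimage G hcover x
  set F : ((r : Fin B) → {j : Fin d // j ∈ G r} → ℝ) → ℝ :=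
    fun v => ∑ r, pNormOn p (v r) with hF
  have hFcont : Continuous F :=
    continuous_finset_sum _ fun r _ => (pNormOn_continuous p).comp (continuous_apply r)
  have hFnonneg : ∀ v, 0 ≤ F v := fun v => Finset.sum_nonneg fun r _ => pNormOn_nonneg p _
  have hterm : ∀ v (r : Fin B), pNormOn p (v r) ≤ F v := fun v r =>
    Finset.single_le_sum (fun r _ => pNormOn_nonneg p (v r)) (Finset.mem_univ r)
  have hPcont : Continuous (Pmap G) := (Pmap G).continuous_of_finiteDimensional
  set K := (Pmap G ⁻¹' {x}) ∩ {v | F v ≤ F v0} with hK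
  have hv0K : v0 ∈ K := ⟨by simp [Pmap_apply, hv0], Set.mem_setOf.2 (le_refl _)⟩
  have hKclosed : IsClosed K :=
    (isClosed_singleton.preimage hPcont).inter (isClosed_le hFcont continuous_const)
  choose C hCpos hCle using fun r : Fin B => pNormOn_bound p {j : Fin d // j ∈ G r}
  set M : ℝ := ∑ r, C r * F v0 with hM
  have hMnonneg : 0 ≤ M := Finset.sum_nonneg fun r _ =>
    mul_nonneg (hCpos r).le (hFnonneg v0)
  have hKsub : K ⊆ Metric.closedBall 0 M := by
    intro v hv
    rw [Metric.mem_closedBall, dist_zero_right]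
    rw [pi_norm_le_iff_of_nonneg hMnonneg]
    intro r
    calc ‖v r‖ ≤ C r * pNormOn p (v r) := hCle r _
      _ ≤ C r * F v := by
          have := hterm v r
          nlinarith [hCpos r]
      _ ≤ C r * F v0 := by
          have : F v ≤ F v0 := hv.2
          nlinarith [hCpos r]
      _ ≤ M := Finset.single_le_sum
          (fun r _ => mul_nonneg (hCpos r).le (hFnonneg v0)) (Finset.mem_univ r)
  have hKcompact : IsCompact K :=
    Metric.isCompact_of_isClosed_isBounded hKclosed
      (Metric.isBounded_closedBall.subset hKsub)
  obtain ⟨vm, hvmK, hmin⟩ := hKcompact.exists_isMinOn ⟨v0, hv0K⟩ hFcont.continuousOn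
  have hvmx : (∑ r, embed (G r) (vm r)) = x := by
    have := hvmK.1
    simpa [Pmap_apply] using this
  refine ⟨vm, hvmx, le_antisymm ?_ (omega_le p G vm hvmx)⟩
  refine le_csInf ⟨F v0, v0, hv0, rfl⟩ ?_
  rintro s ⟨w, hwx, rfl⟩
  by_cases hw : F w ≤ F v0
  · exact hmin ⟨by simp [Pmap_apply, hwx], hw⟩
  · exact (hmin hv0K).trans (le_of_not_ge hw)

lemma omega_nonneg {d B : ℕ} (p : ℝ≥0∞) [Fact (1 ≤ p)] (G : Fin B → Finset (Fin d))
    (hcover : ∀ j : Fin d, ∃ r, j ∈ G r) (x : Fin d → ℝ) : 0 ≤ Omega p G x := by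
  obtain ⟨v, -, h⟩ := omega_attained p G hcover x
  rw [← h]
  exact Finset.sum_nonneg fun r _ => pNormOn_nonneg p _

noncomputable def grpNorm {d : ℕ} (p : ℝ≥0∞) [Fact (1 ≤ p)] (G : Finset (Fin d))
    (x : Fin d → ℝ) : ℝ :=
  pNormOn p (fun j : {j : Fin d // j ∈ G} => x j.1)

noncomputable def nrm2 {d : ℕ} (x : Fin d → ℝ) : ℝ := Real.sqrt (∑ j, (x j) ^ 2)

/-- Equivalence of the latent group lasso problem with its replicated (latent variable)
formulation: the infima coincide and minimizers correspond via `x = P* v`. -/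
theorem stmt13 {d n B : ℕ} (Psi : (Fin d → ℝ) →ₗ[ℝ] (Fin n → ℝ)) (y : Fin n → ℝ)
    (τ : ℝ) (hτ : 0 < τ) (p : ℝ≥0∞) [Fact (1 ≤ p)] (hp : 1 < p)
    (G : Fin B → Finset (Fin d)) (hcover : ∀ j : Fin d, ∃ r, j ∈ G r) :
    let f : (Fin d → ℝ) → ℝ := fun x =>
      (1 / (n : ℝ)) * ∑ i, (Psi x i - y i) ^ 2 + 2 * τ * Omega p G x
    let g : ((r : Fin B) → {j : Fin d // j ∈ G r} → ℝ) → ℝ := fun v =>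
      (1 / (n : ℝ)) * ∑ i, (Psi (∑ r, embed (G r) (v r)) i - y i) ^ 2 +
        2 * τ * ∑ r, pNormOn p (v r)
    sInf (Set.range f) = sInf (Set.range g) ∧
    ∀ x : Fin d → ℝ, (∀ x', f x ≤ f x') ↔
      ∃ v, (∀ v', g v ≤ g v') ∧ x = ∑ r, embed (G r) (v r) := by
  intro f g
  have hDnonneg : ∀ x : Fin d → ℝ, 0 ≤ (1 / (n : ℝ)) * ∑ i, (Psi x i - y i) ^ 2 := by
    intro x
    apply mul_nonneg (by positivity)
    exact Finset.sum_nonneg fun i _ => sq_nonneg _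
  have hfg : ∀ v, f (∑ r, embed (G r) (v r)) ≤ g v := by
    intro v
    have h := omega_le p G v rfl
    simp only [f, g]
    nlinarith
  have hattain : ∀ x : Fin d → ℝ, ∃ v, (∑ r, embed (G r) (v r)) = x ∧ g v = f x := by
    intro x
    obtain ⟨v, hvx, hsum⟩ := omega_attained p G hcover x
    exact ⟨v, hvx, by simp only [f, g, hvx, hsum]⟩
  have hfnn : ∀ x, 0 ≤ f x := by
    intro x
    have h1 := hDnonneg x
    have h2 := omega_nonneg p G hcover x
    simp only [f]
    nlinarith
  have hgnn : ∀ v, 0 ≤ g v := by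
    intro v
    have h1 := hDnonneg (∑ r, embed (G r) (v r))
    have h2 : (0:ℝ) ≤ ∑ r, pNormOn p (v r) :=
      Finset.sum_nonneg fun r _ => pNormOn_nonneg p _
    simp only [g]
    nlinarith
  have hbf : BddBelow (Set.range f) := ⟨0, by rintro - ⟨x, rfl⟩; exact hfnn x⟩
  have hbg : BddBelow (Set.range g) := ⟨0, by rintro - ⟨v, rfl⟩; exact hgnn v⟩
  have hnef : (Set.range f).Nonempty := Set.range_nonempty f
  have hneg : (Set.range g).Nonempty := Set.range_nonempty g
  constructor
  · apply le_antisymm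
    · refine le_csInf hneg ?_
      rintro b ⟨v, rfl⟩
      exact (csInf_le hbf (Set.mem_range_self _)).trans (hfg v)
    · refine le_csInf hnef ?_
      rintro b ⟨x, rfl⟩
      obtain ⟨v, hvx, hgv⟩ := hattain x
      exact hgv ▸ csInf_le hbg (Set.mem_range_self v)
  · intro x
    constructor
    · intro hx
      obtain ⟨v, hvx, hgv⟩ := hattain x
      refine ⟨v, fun v' => ?_, hvx.symm⟩
      calc g v = f x := hgv
        _ ≤ f (∑ r, embed (G r) (v' r)) := hx _
        _ ≤ g v' := hfg v'
    · rintro ⟨v, hv, rfl⟩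
      intro x'
      obtain ⟨v', hvx', hgv'⟩ := hattain x'
      calc f (∑ r, embed (G r) (v r)) ≤ g v := hfg v
        _ ≤ g v' := hv v'
        _ = f x' := hgv'
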